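/- Let Ψ : (∏_{r=1}^{q} Fin d_r) → ℂ be a normalized q-partite pure state, let N ≥ 1, and let Ω₁, …, Ω_q be permutations of {1,…,N}. If |Z(Ψ; Ω₁,…,Ω_q)| = 1, then for every family of index assignments i_r : {1,…,N} → Fin d_r (r = 1,…,q) one has ∏_{x=1}^{N} Ψ(i₁(Ω₁(x)), …, i_q(Ω_q(x))) = ∏_{x=1}^{N} Ψ(i₁(x), …, i_q(x)); equivalently, the replicated state Ψ^{⊗N} is a fixed vector of the permutation operator Ω₁Ω₂⋯Ω_q with eigenvalue exactly 1. -/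

import Mathlib

open scoped BigOperators

noncomputable section

/-- The replica invariant `Z(Ψ; Ω₁,…,Ω_q)` for `N` replicas. -/
def Zrep (q N : ℕ) (d : Fin q → ℕ) (Ψ : (∀ r, Fin (d r)) → ℂ)
    (Ω : Fin q → Equiv.Perm (Fin N)) : ℂ :=
  ∑ i : ∀ r : Fin q, Fin N → Fin (d r),
    (∏ x : Fin N, (starRingEnd ℂ) (Ψ fun r => i r x)) *
      (∏ x : Fin N, Ψ fun r => i r (Ω r x))

theorem replica_extremal_fixed_vector
    (q N : ℕ) (hN : 1 ≤ N) (d : Fin q → ℕ)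
    (Ψ : (∀ r, Fin (d r)) → ℂ)
    (hΨ : ∑ v : ∀ r, Fin (d r), ‖Ψ v‖ ^ 2 = 1)
    (Ω : Fin q → Equiv.Perm (Fin N))
    (hZ : ‖Zrep q N d Ψ Ω‖ = 1) :
    ∀ i : ∀ r : Fin q, Fin N → Fin (d r),
      (∏ x : Fin N, Ψ fun r => i r (Ω r x)) = ∏ x : Fin N, Ψ fun r => i r x := by
  classical
  set I := ∀ r : Fin q, Fin N → Fin (d r) with hI
  -- the two vectors in Euclidean space
  set a : EuclideanSpace ℂ I := WithLp.toLp 2 (fun i : I => ∏ x : Fin N, Ψ fun r => i r x) with ha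
  set b : EuclideanSpace ℂ I := WithLp.toLp 2 (fun i : I => ∏ x : Fin N, Ψ fun r => i r (Ω r x)) with hb
  -- reindexing equivalence
  let σ : I ≃ I :=
    Equiv.piCongrRight fun r => Equiv.arrowCongr (Ω r)⁻¹ (Equiv.refl (Fin (d r)))
  have hσ : ∀ i : I, σ i = fun r x => i r (Ω r x) := by
    intro i; funext r x
    simp [σ, Equiv.piCongrRight, Equiv.arrowCongr, Equiv.Perm.inv_def]
  have hba : ∀ i : I, b i = a (σ i) := by
    intro i; rw [hσ]
  -- norm of a
  have hsum : ∑ i : I, ‖a i‖ ^ 2 = 1 := by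
    let e : (Fin N → ∀ r, Fin (d r)) ≃ I :=
      ⟨fun j r x => j x r, fun i x r => i r x, fun _ => rfl, fun _ => rfl⟩
    have : ∑ i : I, ‖a i‖ ^ 2 = ∑ j : Fin N → (∀ r, Fin (d r)), ∏ x, ‖Ψ (j x)‖ ^ 2 := by
      rw [← Equiv.sum_comp e]
      refine Finset.sum_congr rfl fun j _ => ?_
      simp only [ha, PiLp.toLp_apply]
      rw [norm_prod, ← Finset.prod_pow]
      rfl
    rw [this]
    rw [← Fintype.sum_pow (fun v : ∀ r, Fin (d r) => ‖Ψ v‖ ^ 2) N, hΨ, one_pow]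
  have hna : ‖a‖ = 1 := by
    rw [EuclideanSpace.norm_eq]
    simp only [← hsum]
    rw [show (∑ i : I, ‖a i‖ ^ 2) = 1 from hsum, Real.sqrt_one]
  have hnb : ‖b‖ = 1 := by
    rw [EuclideanSpace.norm_eq]
    have : ∑ i : I, ‖b i‖ ^ 2 = ∑ i : I, ‖a i‖ ^ 2 := by
      rw [← Equiv.sum_comp σ (fun i => ‖a i‖ ^ 2)]
      exact Finset.sum_congr rfl fun i _ => by rw [hba]
    rw [this, hsum, Real.sqrt_one]
  -- the inner product equals Zrep
  have hinner : (inner ℂ a b : ℂ) = Zrep q N d Ψ Ω := by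
    rw [Zrep]
    rw [PiLp.inner_apply]
    refine Finset.sum_congr rfl fun i _ => ?_
    rw [RCLike.inner_apply', ha, hb]
    simp only [map_prod, PiLp.toLp_apply]
  -- nonzero witness: a constant index
  have hv : ∃ v : ∀ r, Fin (d r), Ψ v ≠ 0 := by
    by_contra h
    push_neg at h
    simp only [h, norm_zero] at hΨ
    simp at hΨ
  obtain ⟨v, hvne⟩ := hv
  let i₀ : I := fun r _ => v r
  have hai₀ : a i₀ ≠ 0 := by
    simp only [ha, PiLp.toLp_apply]
    exact Finset.prod_ne_zero_iff.mpr fun x _ => hvne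
  have hbi₀ : b i₀ = a i₀ := by rw [hba]
  have ha0 : a ≠ 0 := fun h => hai₀ (by rw [h]; rfl)
  have hb0 : b ≠ 0 := fun h => hai₀ (by rw [← hbi₀, h]; rfl)
  have hcs : ‖(inner ℂ a b : ℂ)‖ = ‖a‖ * ‖b‖ := by
    rw [hinner, hna, hnb, mul_one]
    exact hZ
  obtain ⟨r, hr0, hrb⟩ := (norm_inner_eq_norm_iff ha0 hb0).mp hcs
  have hr1 : r = 1 := by
    have h1 : b i₀ = r * a i₀ := by rw [hrb]; rfl
    rw [hbi₀] at h1
    have h2 : r * a i₀ = 1 * a i₀ := by rw [one_mul, ← h1]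
    exact mul_right_cancel₀ hai₀ h2
  intro i
  have : b i = r * a i := by rw [hrb]; rfl
  rw [hr1, one_mul] at this
  exact this
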